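/- Let X be a geodesic metric space and let Z be a closed, unbounded subset of X. If Z is Morse, then Z is contracting: for every r ≥ 0 the quantity σ(r) := sup{ diam(π_Z(x) ∪ π_Z(y)) : d(x,y) ≤ d(x,Z) ≤ r } is finite and σ(r)/r → 0 as r → ∞. -/

import Mathlib

open Metric Set

section Defs

variable {X : Type*} [MetricSpace X]

/-- A unit-speed geodesic segment from `p` to `q`, parameterized on `[0, dist p q]`. -/
def IsGeodesicFrom (γ : ℝ → X) (p q : X) : Prop :=
  γ 0 = p ∧ γ (dist p q) = q ∧
    ∀ s ∈ Set.Icc (0 : ℝ) (dist p q), ∀ t ∈ Set.Icc (0 : ℝ) (dist p q),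
      dist (γ s) (γ t) = |s - t|

/-- A geodesic metric space: every pair of points is joined by a geodesic segment. -/
def IsGeodesicSpace (X : Type*) [MetricSpace X] : Prop :=
  ∀ p q : X, ∃ γ : ℝ → X, IsGeodesicFrom γ p q

/-- CAT(0): a geodesic space in which every geodesic triangle satisfies the comparison
inequality; equivalently (and as formalized here), for every geodesic `γ` from `p` to `q`
and every point `x`, the distance from `x` to a point of `γ` is bounded by the distance
between the corresponding points of a comparison triangle in the Euclidean plane:
`d(x, γ t)² ≤ (1 - t/d)·d(x,p)² + (t/d)·d(x,q)² - (t/d)(1 - t/d)·d²` where `d = d(p,q)`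
(written below multiplied through by `d` to avoid division). -/
def IsCAT0Space (X : Type*) [MetricSpace X] : Prop :=
  IsGeodesicSpace X ∧
    ∀ p q : X, ∀ γ : ℝ → X, IsGeodesicFrom γ p q → ∀ x : X,
      ∀ t ∈ Set.Icc (0 : ℝ) (dist p q),
        dist x (γ t) ^ 2 * dist p q ≤
          (dist p q - t) * dist x p ^ 2 + t * dist x q ^ 2 - t * (dist p q - t) * dist p q

/-- The nearest-point projection `π_Z(x) = {z ∈ Z | d(x,z) = d(x,Z)}`. -/
def projSet (Z : Set X) (x : X) : Set X := {z ∈ Z | dist x z = Metric.infDist x Z}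

/-- An `(L,A)`-quasi-geodesic segment defined on `[a,b]`. -/
def IsQuasiGeodesicOn (L A a b : ℝ) (γ : ℝ → X) : Prop :=
  a ≤ b ∧ ∀ s ∈ Set.Icc a b, ∀ t ∈ Set.Icc a b,
    |s - t| / L - A ≤ dist (γ s) (γ t) ∧ dist (γ s) (γ t) ≤ L * |s - t| + A

/-- `Z` is Morse: for all `L ≥ 1`, `A ≥ 0` there is a bound `M = μ(L,A)` on the distance
to `Z` of points on `(L,A)`-quasi-geodesic segments with both endpoints on `Z`. -/
def IsMorse (Z : Set X) : Prop :=
  ∀ L : ℝ, 1 ≤ L → ∀ A : ℝ, 0 ≤ A → ∃ M : ℝ,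
    ∀ a b : ℝ, ∀ γ : ℝ → X, IsQuasiGeodesicOn L A a b γ → γ a ∈ Z → γ b ∈ Z →
      ∀ s ∈ Set.Icc a b, Metric.infDist (γ s) Z ≤ M

/-- `Z` with the open balls of radius `d(z,z')/3` about `z` and `z'` removed. -/
def recRemoved (Z : Set X) (z z' : X) : Set X :=
  Z \ (Metric.ball z (dist z z' / 3) ∪ Metric.ball z' (dist z z' / 3))

/-- `Z` is `ρ`-recurrent: for every `q ≥ 1`, every rectifiable segment `γ` with endpoints
`z, z' ∈ Z` and `len(γ) ≤ q · d(z,z')` comes within distance `ρ(q)` of `Z'`, where `Z'` is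
`Z` with the open balls of radius `d(z,z')/3` about the endpoints removed.  (Distance to
`Z'` is measured by `infEdist`, which is `∞` when `Z'` is empty, matching
`inf ∅ = ∞` in the definition of `ρ`.) -/
def IsRecurrentWith (Z : Set X) (ρ : ℝ → ℝ) : Prop :=
  ∀ q : ℝ, 1 ≤ q → ∀ a b : ℝ, a ≤ b → ∀ γ : ℝ → X,
    ContinuousOn γ (Set.Icc a b) → γ a ∈ Z → γ b ∈ Z →
    eVariationOn γ (Set.Icc a b) ≤ ENNReal.ofReal (q * dist (γ a) (γ b)) →
    ∃ s ∈ Set.Icc a b,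
      EMetric.infEdist (γ s) (recRemoved Z (γ a) (γ b)) ≤ ENNReal.ofReal (ρ q)

/-- `Z` is recurrent: `ρ(q) < ∞` for every `q ≥ 1`, i.e. some real-valued function `ρ`
witnesses recurrence. -/
def IsRecurrent (Z : Set X) : Prop := ∃ ρ : ℝ → ℝ, IsRecurrentWith Z ρ

/-- `Z` is contracting with gauge `σ`: `σ(r)` bounds `diam(π_Z(x) ∪ π_Z(y))` whenever
`d(x,y) ≤ d(x,Z) ≤ r`, and `σ(r)/r → 0` as `r → ∞`. -/
def IsContractingWith (Z : Set X) (σ : ℝ → ℝ) : Prop :=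
  (∀ r : ℝ, 0 ≤ r → ∀ x y : X, dist x y ≤ Metric.infDist x Z → Metric.infDist x Z ≤ r →
      ∀ p ∈ projSet Z x ∪ projSet Z y, ∀ p' ∈ projSet Z x ∪ projSet Z y,
        dist p p' ≤ σ r) ∧
    Filter.Tendsto (fun r => σ r / r) Filter.atTop (nhds 0)

/-- `Z` is contracting: there is a sublinear contraction gauge. -/
def IsContracting (Z : Set X) : Prop := ∃ σ : ℝ → ℝ, IsContractingWith Z σ

/-- `Z` is strongly contracting: a single constant `C ≥ 0` bounds
`diam(π_Z(x) ∪ π_Z(y))` whenever `d(x,y) ≤ d(x,Z)`. -/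
def IsStronglyContracting (Z : Set X) : Prop :=
  ∃ C : ℝ, 0 ≤ C ∧ ∀ x y : X, dist x y ≤ Metric.infDist x Z →
    ∀ p ∈ projSet Z x ∪ projSet Z y, ∀ p' ∈ projSet Z x ∪ projSet Z y, dist p p' ≤ C

/-- `X` is `δ`-hyperbolic: every geodesic triangle is `δ`-thin, i.e. each side lies in the
`δ`-neighborhood of the union of the other two sides. -/
def IsDeltaHyperbolic (X : Type*) [MetricSpace X] (δ : ℝ) : Prop :=
  ∀ x y z : X, ∀ γ₁ γ₂ γ₃ : ℝ → X,
    IsGeodesicFrom γ₁ x y → IsGeodesicFrom γ₂ y z → IsGeodesicFrom γ₃ x z →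
    ∀ t ∈ Set.Icc (0 : ℝ) (dist x y),
      Metric.infDist (γ₁ t)
        (γ₂ '' Set.Icc (0 : ℝ) (dist y z) ∪ γ₃ '' Set.Icc (0 : ℝ) (dist x z)) ≤ δ

/-- `Z` is quasi-convex: every geodesic segment with both endpoints in `Z` lies in the
`C`-neighborhood of `Z`, for some `C ≥ 0`. -/
def IsQuasiConvex (Z : Set X) : Prop :=
  ∃ C : ℝ, 0 ≤ C ∧ ∀ p ∈ Z, ∀ q ∈ Z, ∀ γ : ℝ → X, IsGeodesicFrom γ p q →
    ∀ t ∈ Set.Icc (0 : ℝ) (dist p q), Metric.infDist (γ t) Z ≤ C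

end Defs

section AuxMorse

variable {X : Type*} [MetricSpace X]

def LipOn (γ : ℝ → X) (a b : ℝ) : Prop :=
  ∀ s ∈ Set.Icc a b, ∀ t ∈ Set.Icc a b, dist (γ s) (γ t) ≤ |s - t|

lemma lipOn_glue {γ₁ γ₂ : ℝ → X} {a c b : ℝ} (hac : a ≤ c) (hcb : c ≤ b)
    (h₁ : LipOn γ₁ a c) (h₂ : LipOn γ₂ c b) (hj : γ₁ c = γ₂ c) :
    LipOn (fun t => if t ≤ c then γ₁ t else γ₂ t) a b := by
  have key : ∀ s ∈ Icc a b, ∀ t ∈ Icc a b, s ≤ t →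
      dist ((fun t => if t ≤ c then γ₁ t else γ₂ t) s)
        ((fun t => if t ≤ c then γ₁ t else γ₂ t) t) ≤ |s - t| := by
    intro s hs t ht hst
    simp only
    by_cases h1 : s ≤ c
    · by_cases h2 : t ≤ c
      · rw [if_pos h1, if_pos h2]
        exact h₁ s ⟨hs.1, h1⟩ t ⟨ht.1, h2⟩
      · rw [if_pos h1, if_neg h2]
        push_neg at h2
        have e1 : dist (γ₁ s) (γ₁ c) ≤ |s - c| := h₁ s ⟨hs.1, h1⟩ c ⟨hac, le_refl c⟩
        have e2 : dist (γ₂ c) (γ₂ t) ≤ |c - t| := h₂ c ⟨le_refl c, hcb⟩ t ⟨le_of_lt h2, ht.2⟩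
        have tri : dist (γ₁ s) (γ₂ t) ≤ dist (γ₁ s) (γ₁ c) + dist (γ₂ c) (γ₂ t) := by
          calc dist (γ₁ s) (γ₂ t) ≤ dist (γ₁ s) (γ₁ c) + dist (γ₁ c) (γ₂ t) := dist_triangle _ _ _
          _ = dist (γ₁ s) (γ₁ c) + dist (γ₂ c) (γ₂ t) := by rw [hj]
        rw [abs_of_nonpos (by linarith : s - c ≤ 0)] at e1
        rw [abs_of_nonpos (by linarith : c - t ≤ 0)] at e2
        rw [abs_of_nonpos (by linarith : s - t ≤ 0)]
        linarith
    · by_cases h2 : t ≤ c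
      · exact absurd (hst.trans h2) h1
      · rw [if_neg h1, if_neg h2]
        push_neg at h1
        exact h₂ s ⟨le_of_lt h1, hs.2⟩ t ⟨(le_of_lt h1).trans hst, ht.2⟩
  intro s hs t ht
  rcases le_total s t with h | h
  · exact key s hs t ht h
  · rw [dist_comm, abs_sub_comm]; exact key t ht s hs h

lemma lipOn_of_geodesic_shift {g : ℝ → X} {p q : X} (hg : IsGeodesicFrom g p q) (a : ℝ) :
    LipOn (fun t => g (t - a)) a (a + dist p q) := by
  intro s hs t ht
  have h1 : s - a ∈ Icc (0:ℝ) (dist p q) := ⟨by linarith [hs.1], by linarith [hs.2]⟩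
  have h2 : t - a ∈ Icc (0:ℝ) (dist p q) := ⟨by linarith [ht.1], by linarith [ht.2]⟩
  have := hg.2.2 (s - a) h1 (t - a) h2
  simp only
  rw [this]
  apply le_of_eq
  congr 1
  ring

lemma lipOn_mono {γ : ℝ → X} {a b a' b' : ℝ} (h : LipOn γ a b) (ha : a ≤ a') (hb : b' ≤ b) :
    LipOn γ a' b' := fun s hs t ht =>
  h s ⟨ha.trans hs.1, hs.2.trans hb⟩ t ⟨ha.trans ht.1, ht.2.trans hb⟩

/-- Taming: any 1-Lipschitz path can be replaced by an (L,2)-taut 1-Lipschitz path with the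
same endpoints, each of whose points lies within `(m - m')/(L-1)` of the original path. -/
lemma tame_exists (hX : IsGeodesicSpace X) {L : ℝ} (hL : 2 ≤ L) :
    ∀ n : ℕ, ∀ m : ℝ, 0 ≤ m → m ≤ n → ∀ γ : ℝ → X, LipOn γ 0 m →
    ∃ m' : ℝ, 0 ≤ m' ∧ m' ≤ m ∧ ∃ p : ℝ → X,
      p 0 = γ 0 ∧ p m' = γ m ∧ LipOn p 0 m' ∧
      (∀ s ∈ Icc (0:ℝ) m', ∀ t ∈ Icc (0:ℝ) m', |s - t| / L - 2 ≤ dist (p s) (p t)) ∧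
      (∀ s ∈ Icc (0:ℝ) m', ∃ t ∈ Icc (0:ℝ) m, dist (p s) (γ t) ≤ (m - m') / (L - 1)) := by
  have hL1 : (0:ℝ) < L - 1 := by linarith
  have hL0 : (0:ℝ) < L := by linarith
  intro n
  induction n using Nat.strong_induction_on with
  | _ n ih =>
    intro m hm0 hmn γ hγ
    by_cases hbad : ∃ u ∈ Icc (0:ℝ) m, ∃ v ∈ Icc (0:ℝ) m, u ≤ v ∧
        dist (γ u) (γ v) < (v - u) / L - 2
    · obtain ⟨u, hu, v, hv, huv, hlt⟩ := hbad
      set b := dist (γ u) (γ v) with hbdef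
      obtain ⟨g, hg0, hgend, hgiso⟩ := hX (γ u) (γ v)
      have hb0 : 0 ≤ b := dist_nonneg
      have hvu : L * (b + 2) < v - u := by
        have h1 : b + 2 < (v - u) / L := by linarith
        calc L * (b + 2) < L * ((v - u) / L) := by
              exact mul_lt_mul_of_pos_left h1 hL0
        _ = v - u := by field_simp
      have hdec : b + 4 ≤ (v - u) - b := by nlinarith
      have hbshift : (L - 1) * b ≤ (v - u) - b := by nlinarith
      set sh := (v - u) - b with hshdef
      set m₁ := m - sh with hm₁def
      have hm₁0 : 0 ≤ m₁ := by
        have : v - u ≤ m := by linarith [hu.1, hv.2]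
        simp only [hm₁def, hshdef]; linarith
      have hub_le : u + b ≤ m₁ := by
        simp only [hm₁def, hshdef]; linarith [hv.2]
      have hm4 : (4:ℝ) ≤ m := by nlinarith [hu.1, hv.2]
      have hn1 : 1 ≤ n := by
        by_contra h
        push_neg at h
        interval_cases n
        · simp at hmn; linarith
      have hm₁n : m₁ ≤ (n - 1 : ℕ) := by
        have : ((n - 1 : ℕ) : ℝ) = (n : ℝ) - 1 := by
          have := Nat.cast_sub hn1 (R := ℝ); simpa using this
        rw [this]
        simp only [hm₁def]
        linarith
      -- the surgered path
      set inner : ℝ → X := fun t => if t ≤ u + b then g (t - u) else γ (t + sh) with hinnerdef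
      set γ₁ : ℝ → X := fun t => if t ≤ u then γ t else inner t with hγ₁def
      have hlip_g : LipOn (fun t => g (t - u)) u (u + b) := lipOn_of_geodesic_shift ⟨hg0, hgend, hgiso⟩ u
      have hlip_3 : LipOn (fun t => γ (t + sh)) (u + b) m₁ := by
        intro s hs t ht
        have h1 : s + sh ∈ Icc (0:ℝ) m := by
          constructor
          · have : 0 ≤ u + b := by linarith [hu.1]
            have := hs.1; simp only [hshdef]; linarith
          · have := hs.2; simp only [hm₁def] at this ⊢; linarith
        have h2 : t + sh ∈ Icc (0:ℝ) m := by
          constructor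
          · have := ht.1; simp only [hshdef]; linarith [hu.1]
          · have := ht.2; simp only [hm₁def] at this ⊢; linarith
        have := hγ (s + sh) h1 (t + sh) h2
        simpa using this
      have hjin : (fun t => g (t - u)) (u + b) = (fun t => γ (t + sh)) (u + b) := by
        simp only
        have h1 : u + b - u = b := by ring
        have h2 : u + b + sh = v := by simp only [hshdef]; ring
        rw [h1, h2, hgend]
      have hlip_inner : LipOn inner u m₁ := by
        rw [hinnerdef]
        exact lipOn_glue (by linarith) hub_le hlip_g hlip_3 hjin
      have hjout : γ u = inner u := by
        rw [hinnerdef]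
        simp only
        rw [if_pos (by linarith : u ≤ u + b)]
        have : u - u = 0 := by ring
        rw [this, hg0]
      have hlip₁ : LipOn γ₁ 0 m₁ := by
        rw [hγ₁def]
        exact lipOn_glue hu.1 (by linarith [hub_le] : u ≤ m₁) (lipOn_mono hγ le_rfl (by linarith [hv.2] : u ≤ m)) hlip_inner hjout
      have hγ₁0 : γ₁ 0 = γ 0 := by
        rw [hγ₁def]; simp only; rw [if_pos hu.1]
      have hγ₁end : γ₁ m₁ = γ m := by
        rw [hγ₁def, hinnerdef]; simp only
        by_cases hc1 : m₁ ≤ u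
        · have hbb : b ≤ 0 := by linarith [hub_le]
          have hb00 : b = 0 := le_antisymm hbb hb0
          have hmv : m = v := by
            simp only [hm₁def, hshdef] at hc1
            have : m₁ = u := le_antisymm hc1 (by linarith [hub_le])
            simp only [hm₁def, hshdef] at this
            linarith
          rw [if_pos hc1]
          have hmu : m₁ = u := le_antisymm hc1 (by linarith [hub_le])
          rw [hmu]
          have : γ u = γ v := eq_of_dist_eq_zero hb00
          rw [this, hmv]
        · rw [if_neg hc1]
          by_cases hc2 : m₁ ≤ u + b
          · have hm₁ub : m₁ = u + b := le_antisymm hc2 hub_le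
            have hmv : m = v := by simp only [hm₁def, hshdef] at hm₁ub; linarith
            rw [if_pos hc2, hm₁ub]
            have : u + b - u = b := by ring
            rw [this, hgend, hmv]
          · rw [if_neg hc2]
            congr 1
            simp only [hm₁def]; ring
      obtain ⟨m', hm'0, hm'm₁, p, hp0, hpend, hplip, hpqg, hpborder⟩ :=
        ih (n - 1) (Nat.sub_lt hn1 one_pos) m₁ hm₁0 hm₁n γ₁ hlip₁
      refine ⟨m', hm'0, hm'm₁.trans (by simp only [hm₁def]; linarith), p, ?_, ?_, hplip, hpqg, ?_⟩
      · rw [hp0, hγ₁0]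
      · rw [hpend, hγ₁end]
      · intro s hs
        obtain ⟨t₁, ht₁, hdist⟩ := hpborder s hs
        have hbb : b ≤ (m - m₁) / (L - 1) := by
          rw [le_div_iff₀ hL1]
          have : m - m₁ = sh := by simp only [hm₁def]; ring
          rw [this]
          simpa [mul_comm] using hbshift
        have hmono : (m₁ - m') / (L - 1) + (m - m₁) / (L - 1) = (m - m') / (L - 1) := by
          field_simp
          ring
        by_cases hc1 : t₁ ≤ u
        · refine ⟨t₁, ⟨ht₁.1, by linarith [hv.2]⟩, ?_⟩
          have : γ₁ t₁ = γ t₁ := by rw [hγ₁def]; simp only; rw [if_pos hc1]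
          rw [this] at hdist
          apply hdist.trans
          rw [← hmono]
          have : (0:ℝ) ≤ (m - m₁)/(L-1) := le_trans hb0 hbb
          linarith
        · by_cases hc2 : t₁ ≤ u + b
          · refine ⟨u, ⟨hu.1, hu.2⟩, ?_⟩
            have hval : γ₁ t₁ = g (t₁ - u) := by
              rw [hγ₁def, hinnerdef]; simp only; rw [if_neg hc1, if_pos hc2]
            have hgu : dist (g (t₁ - u)) (γ u) ≤ b := by
              have h1 : t₁ - u ∈ Icc (0:ℝ) b := ⟨by push_neg at hc1; linarith, by linarith⟩
              have h0 : (0:ℝ) ∈ Icc (0:ℝ) b := ⟨le_refl 0, hb0⟩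
              have := hgiso (t₁ - u) h1 0 h0
              rw [← hg0]
              rw [this]
              rw [abs_of_nonneg (by linarith [h1.1] : (0:ℝ) ≤ t₁ - u - 0)]
              push_neg at hc1
              linarith
            calc dist (p s) (γ u) ≤ dist (p s) (γ₁ t₁) + dist (γ₁ t₁) (γ u) := dist_triangle _ _ _
            _ = dist (p s) (γ₁ t₁) + dist (g (t₁ - u)) (γ u) := by rw [hval]
            _ ≤ (m₁ - m') / (L - 1) + b := add_le_add hdist hgu
            _ ≤ (m₁ - m') / (L - 1) + (m - m₁) / (L - 1) := by linarith
            _ = (m - m') / (L - 1) := hmono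
          · refine ⟨t₁ + sh, ⟨?_, ?_⟩, ?_⟩
            · push_neg at hc1; simp only [hshdef]; linarith [hu.1]
            · have := ht₁.2; simp only [hm₁def] at this ⊢; linarith
            · have : γ₁ t₁ = γ (t₁ + sh) := by
                rw [hγ₁def, hinnerdef]; simp only; rw [if_neg hc1, if_neg hc2]
              rw [this] at hdist
              apply hdist.trans
              rw [← hmono]
              have : (0:ℝ) ≤ (m - m₁)/(L-1) := le_trans hb0 hbb
              linarith
    · -- already taut
      push_neg at hbad
      refine ⟨m, hm0, le_refl m, γ, rfl, rfl, hγ, ?_, ?_⟩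
      · intro s hs t ht
        rcases le_total s t with h | h
        · have := hbad s hs t ht h
          rw [abs_of_nonpos (by linarith : s - t ≤ 0), neg_sub]
          linarith
        · have := hbad t ht s hs h
          rw [dist_comm, abs_sub_comm]
          rw [abs_of_nonpos (by linarith : t - s ≤ 0), neg_sub]
          linarith
      · intro s hs
        refine ⟨s, hs, ?_⟩
        simp only [dist_self, sub_self, zero_div]
        positivity


lemma BR_lemma (hX : IsGeodesicSpace X) {Z : Set X} (hZne : Z.Nonempty) {L M : ℝ}
    (hL : 2 ≤ L) (hM : 0 ≤ M)
    (hmorse2 : ∀ a b : ℝ, ∀ γ : ℝ → X, IsQuasiGeodesicOn L 2 a b γ → γ a ∈ Z → γ b ∈ Z →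
      ∀ s ∈ Set.Icc a b, Metric.infDist (γ s) Z ≤ M)
    {m : ℝ} (hm : 0 ≤ m) {γ : ℝ → X} (hγ : LipOn γ 0 m) {z z' : X}
    (hγ0 : γ 0 = z) (hγm : γ m = z') (hz : z ∈ Z) (hz' : z' ∈ Z)
    (hD : 6 * (M + 1) < dist z z') :
    ∃ w ∈ Set.Icc (0:ℝ) m, ∃ ζ ∈ Z, dist (γ w) ζ ≤ M + 1 + m / (L - 1) ∧
      dist z z' / 3 ≤ dist z ζ ∧ dist z z' / 3 ≤ dist z' ζ := by
  have hL1 : (0:ℝ) < L - 1 := by linarith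
  obtain ⟨m', hm'0, hm'm, p, hp0, hpm, hplip, hpqg, hpb⟩ :=
    tame_exists hX hL ⌈m⌉₊ m hm (Nat.le_ceil m) γ hγ
  set D := dist z z' with hDdef
  have hD0 : 0 ≤ D := dist_nonneg
  have hqg : IsQuasiGeodesicOn L 2 0 m' p := by
    refine ⟨hm'0, ?_⟩
    intro s hs t ht
    refine ⟨hpqg s hs t ht, ?_⟩
    have h1 := hplip s hs t ht
    nlinarith [abs_nonneg (s - t)]
  have hmb : ∀ s ∈ Set.Icc (0:ℝ) m', Metric.infDist (p s) Z ≤ M := by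
    intro s hs
    exact hmorse2 0 m' p hqg (by rw [hp0, hγ0]; exact hz) (by rw [hpm, hγm]; exact hz') s hs
  have hlipw : LipschitzOnWith 1 p (Set.Icc 0 m') := by
    apply LipschitzOnWith.of_dist_le_mul
    intro x hx y hy
    rw [NNReal.coe_one, one_mul, Real.dist_eq]
    exact hplip x hx y hy
  have hcont : ContinuousOn (fun s => dist (p s) z) (Set.Icc 0 m') :=
    (Continuous.dist continuous_id continuous_const).comp_continuousOn hlipw.continuousOn
  have h0eq : (fun s => dist (p s) z) 0 = 0 := by simp only; rw [hp0, hγ0, dist_self]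
  have hmeq : (fun s => dist (p s) z) m' = D := by simp only; rw [hpm, hγm, dist_comm]
  have hmem : D / 2 ∈ Set.Icc ((fun s => dist (p s) z) 0) ((fun s => dist (p s) z) m') := by
    rw [h0eq, hmeq]
    exact ⟨by linarith, by linarith⟩
  obtain ⟨u, hu, hdu⟩ := intermediate_value_Icc hm'0 hcont hmem
  have hinf : Metric.infDist (p u) Z < M + 1 := lt_of_le_of_lt (hmb u hu) (by linarith)
  obtain ⟨ζ, hζZ, hζd⟩ := (Metric.infDist_lt_iff hZne).1 hinf
  obtain ⟨w, hw, hwd⟩ := hpb u hu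
  have hpuz : dist (p u) z = D / 2 := hdu
  have hmm' : (m - m') / (L - 1) ≤ m / (L - 1) := by
    gcongr
    linarith
  refine ⟨w, hw, ζ, hζZ, ?_, ?_, ?_⟩
  · have tri : dist (γ w) ζ ≤ dist (γ w) (p u) + dist (p u) ζ := dist_triangle _ _ _
    have h1 : dist (γ w) (p u) ≤ (m - m') / (L - 1) := by rw [dist_comm]; exact hwd
    linarith
  · have tri : dist (p u) z ≤ dist (p u) ζ + dist ζ z := dist_triangle _ _ _
    have : dist z ζ = dist ζ z := dist_comm _ _
    linarith
  · have tri : D ≤ dist z (p u) + dist (p u) ζ + dist ζ z' := by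
      calc D ≤ dist z (p u) + dist (p u) z' := dist_triangle _ _ _
      _ ≤ dist z (p u) + (dist (p u) ζ + dist ζ z') := by linarith [dist_triangle (p u) ζ z']
      _ = dist z (p u) + dist (p u) ζ + dist ζ z' := by ring
    have h1 : dist z (p u) = D / 2 := by rw [dist_comm]; exact hpuz
    have h2 : dist z' ζ = dist ζ z' := dist_comm _ _
    linarith


lemma lipOn_of_geodesic {g : ℝ → X} {p q : X} (hg : IsGeodesicFrom g p q) :
    LipOn g 0 (dist p q) := fun s hs t ht => le_of_eq (hg.2.2 s hs t ht)

lemma concat2 {f g : ℝ → X} {a c d : ℝ} (hac : a ≤ c) (hcd : c ≤ d)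
    (hf : LipOn f a c) (hg : LipOn g c d) (hj : f c = g c) :
    ∃ P : ℝ → X, LipOn P a d ∧ (∀ t, t ≤ c → P t = f t) ∧ (∀ t, ¬ t ≤ c → P t = g t) :=
  ⟨fun t => if t ≤ c then f t else g t, lipOn_glue hac hcd hf hg hj,
    fun _ h => if_pos h, fun _ h => if_neg h⟩

set_option maxHeartbeats 2000000 in
lemma key_est (hX : IsGeodesicSpace X) {Z : Set X} (hZne : Z.Nonempty) {q M : ℝ}
    (hq : 1 ≤ q) (hM : 0 ≤ M)
    (hmorse2 : ∀ a b : ℝ, ∀ γ : ℝ → X, IsQuasiGeodesicOn (31*q) 2 a b γ → γ a ∈ Z → γ b ∈ Z →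
      ∀ s ∈ Set.Icc a b, Metric.infDist (γ s) Z ≤ M)
    {u v zu zv : X} (hzu : zu ∈ projSet Z u) (hzv : zv ∈ projSet Z v)
    (he : dist u v ≤ Metric.infDist u Z) :
    dist zu zv ≤ 20 * (M + 1) + 4 * (Metric.infDist u Z) / q := by
  have hq0 : (0:ℝ) < q := by linarith
  have hL : (2:ℝ) ≤ 31 * q := by linarith
  have hL1 : (0:ℝ) < 31 * q - 1 := by linarith
  have hD0 : (0:ℝ) ≤ dist zu zv := dist_nonneg
  have hdu0 : (0:ℝ) ≤ Metric.infDist u Z := Metric.infDist_nonneg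
  have hdv0 : (0:ℝ) ≤ Metric.infDist v Z := Metric.infDist_nonneg
  have hduq : (0:ℝ) ≤ 4 * Metric.infDist u Z / q := by positivity
  have hzuZ : zu ∈ Z := hzu.1
  have hzvZ : zv ∈ Z := hzv.1
  have hA : dist zu u = Metric.infDist u Z := by rw [dist_comm]; exact hzu.2
  have hC : dist v zv = Metric.infDist v Z := hzv.2
  have hA0 : (0:ℝ) ≤ dist zu u := dist_nonneg
  have hB0 : (0:ℝ) ≤ dist u v := dist_nonneg
  have hC0 : (0:ℝ) ≤ dist v zv := dist_nonneg
  have hdv2 : Metric.infDist v Z ≤ 2 * Metric.infDist u Z := by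
    have h1 : Metric.infDist v Z ≤ Metric.infDist u Z + dist v u :=
      Metric.infDist_le_infDist_add_dist
    have h2 : dist v u = dist u v := dist_comm v u
    linarith
  by_cases hD1 : dist zu zv ≤ 6 * (M + 1)
  · linarith
  push_neg at hD1
  obtain ⟨g1, hg10, hg1e, hg1iso⟩ := hX zu u
  obtain ⟨g2, hg20, hg2e, hg2iso⟩ := hX u v
  obtain ⟨g3, hg30, hg3e, hg3iso⟩ := hX v zv
  have hm0 : (0:ℝ) ≤ dist zu u + dist u v + dist v zv := by linarith
  have hg2lip : LipOn (fun t => g2 (t - dist zu u)) (dist zu u) (dist zu u + dist u v) :=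
    lipOn_of_geodesic_shift ⟨hg20, hg2e, hg2iso⟩ (dist zu u)
  have hg3lip : LipOn (fun t => g3 (t - (dist zu u + dist u v)))
      (dist zu u + dist u v) (dist zu u + dist u v + dist v zv) :=
    lipOn_of_geodesic_shift ⟨hg30, hg3e, hg3iso⟩ (dist zu u + dist u v)
  have hg1lip : LipOn g1 0 (dist zu u) := lipOn_of_geodesic ⟨hg10, hg1e, hg1iso⟩
  obtain ⟨In, hInLip, hInL, hInR⟩ := concat2 (by linarith : dist zu u ≤ dist zu u + dist u v)
    (by linarith : dist zu u + dist u v ≤ dist zu u + dist u v + dist v zv) hg2lip hg3lip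
    (by
      show g2 (dist zu u + dist u v - dist zu u) = g3 (dist zu u + dist u v - (dist zu u + dist u v))
      rw [show dist zu u + dist u v - dist zu u = dist u v from by ring,
        show dist zu u + dist u v - (dist zu u + dist u v) = 0 from by ring, hg2e, hg30])
  obtain ⟨P1, hP1lip, hP1L, hP1R⟩ := concat2 hA0
    (by linarith : dist zu u ≤ dist zu u + dist u v + dist v zv) hg1lip hInLip
    (by
      rw [hInL (dist zu u) (by linarith)]
      show g1 (dist zu u) = g2 (dist zu u - dist zu u)
      rw [show dist zu u - dist zu u = 0 from by ring, hg1e, hg20])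
  have hP10 : P1 0 = zu := by rw [hP1L 0 hA0, hg10]
  have hP1m : P1 (dist zu u + dist u v + dist v zv) = zv := by
    by_cases h1 : dist zu u + dist u v + dist v zv ≤ dist zu u
    · have hB' : dist u v = 0 := by linarith
      have hC' : dist v zv = 0 := by linarith
      rw [hP1L _ h1, show dist zu u + dist u v + dist v zv = dist zu u from by linarith,
        hg1e, eq_of_dist_eq_zero hB', eq_of_dist_eq_zero hC']
    · rw [hP1R _ h1]
      by_cases h2 : dist zu u + dist u v + dist v zv ≤ dist zu u + dist u v
      · have hC' : dist v zv = 0 := by linarith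
        rw [hInL _ h2]
        show g2 (dist zu u + dist u v + dist v zv - dist zu u) = zv
        rw [show dist zu u + dist u v + dist v zv - dist zu u = dist u v from by linarith, hg2e]
        exact eq_of_dist_eq_zero hC'
      · rw [hInR _ h2]
        show g3 (dist zu u + dist u v + dist v zv - (dist zu u + dist u v)) = zv
        rw [show dist zu u + dist u v + dist v zv - (dist zu u + dist u v) = dist v zv from by ring,
          hg3e]
  by_cases hc1 : dist zu u + dist u v + dist v zv ≤ q * dist zu zv
  swap
  · push_neg at hc1
    have hm4du : dist zu u + dist u v + dist v zv ≤ 4 * Metric.infDist u Z := by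
      rw [hA, hC]; linarith
    have : dist zu zv ≤ 4 * Metric.infDist u Z / q := by
      rw [le_div_iff₀ hq0]
      nlinarith
    linarith
  · obtain ⟨w, hw, ζ, hζZ, hζd, hζz, hζz'⟩ :=
      BR_lemma hX hZne hL hM hmorse2 hm0 hP1lip hP10 hP1m hzuZ hzvZ hD1
    have hρD : (dist zu u + dist u v + dist v zv) / (31 * q - 1) ≤ dist zu zv / 30 := by
      rw [div_le_div_iff₀ hL1 (by norm_num : (0:ℝ) < 30)]
      nlinarith [mul_nonneg (by linarith : (0:ℝ) ≤ q - 1) hD0]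
    have hρ0 : (0:ℝ) ≤ (dist zu u + dist u v + dist v zv) / (31 * q - 1) := by positivity
    have huζ : Metric.infDist u Z ≤ dist u ζ := Metric.infDist_le_dist_of_mem hζZ
    have hvζ : Metric.infDist v Z ≤ dist v ζ := Metric.infDist_le_dist_of_mem hζZ
    by_cases hw1 : w ≤ dist zu u
    · -- w on first geodesic
      have hval : P1 w = g1 w := hP1L w hw1
      have hdzu : dist zu (P1 w) = w := by
        have h := hg1iso 0 ⟨le_refl 0, hA0⟩ w ⟨hw.1, hw1⟩
        rw [hg10] at h
        rw [hval, h, abs_of_nonpos (by linarith [hw.1] : (0:ℝ) - w ≤ 0)]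
        ring
      have hduw : dist u (P1 w) = dist zu u - w := by
        have h := hg1iso w ⟨hw.1, hw1⟩ (dist zu u) ⟨hA0, le_refl _⟩
        rw [hg1e] at h
        rw [hval, dist_comm, h, abs_of_nonpos (by linarith : w - dist zu u ≤ 0)]
        ring
      have e1 : Metric.infDist u Z ≤ dist u (P1 w) + dist (P1 w) ζ :=
        le_trans huζ (dist_triangle _ _ _)
      have e2 : dist zu zv / 3 ≤ dist zu (P1 w) + dist (P1 w) ζ :=
        le_trans hζz (dist_triangle _ _ _)
      rw [hduw] at e1
      rw [hdzu] at e2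
      linarith [hζd, hρD, hA]
    · by_cases hw2 : w ≤ dist zu u + dist u v
      · -- w on middle geodesic ⇒ second application
        push_neg at hw1
        have hval : P1 w = g2 (w - dist zu u) := by
          rw [hP1R w (by linarith), hInL w hw2]
        have hmem2 : w - dist zu u ∈ Set.Icc (0:ℝ) (dist u v) := ⟨by linarith, by linarith⟩
        have hduw : dist u (P1 w) = w - dist zu u := by
          have h := hg2iso 0 ⟨le_refl 0, hB0⟩ (w - dist zu u) hmem2
          rw [hg20] at h
          rw [hval, h, abs_of_nonpos (by linarith : (0:ℝ) - (w - dist zu u) ≤ 0)]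
          ring
        have hdvw : dist v (P1 w) = dist zu u + dist u v - w := by
          have h := hg2iso (w - dist zu u) hmem2 (dist u v) ⟨hB0, le_refl _⟩
          rw [hg2e] at h
          rw [hval, dist_comm, h, abs_of_nonpos (by linarith : w - dist zu u - dist u v ≤ 0)]
          ring
        have e1 : Metric.infDist u Z ≤ dist u (P1 w) + dist (P1 w) ζ :=
          le_trans huζ (dist_triangle _ _ _)
        have e2 : Metric.infDist v Z ≤ dist v (P1 w) + dist (P1 w) ζ :=
          le_trans hvζ (dist_triangle _ _ _)
        rw [hduw] at e1
        rw [hdvw] at e2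
        -- second path zu → u → zv
        obtain ⟨g4, hg40, hg4e, hg4iso⟩ := hX u zv
        have hA40 : (0:ℝ) ≤ dist u zv := dist_nonneg
        have hA4le : dist u zv ≤ Metric.infDist u Z +
            2 * (M + 1 + (dist zu u + dist u v + dist v zv) / (31 * q - 1)) := by
          have h3 : dist u zv ≤ dist u v + dist v zv := dist_triangle u v zv
          linarith [hζd, hA, hC, he]
        have hm20 : (0:ℝ) ≤ dist zu u + dist u zv := by linarith
        have hg4lip : LipOn (fun t => g4 (t - dist zu u)) (dist zu u) (dist zu u + dist u zv) :=
          lipOn_of_geodesic_shift ⟨hg40, hg4e, hg4iso⟩ (dist zu u)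
        obtain ⟨P2, hP2lip, hP2L, hP2R⟩ := concat2 hA0 (by linarith : dist zu u ≤ dist zu u + dist u zv)
          hg1lip hg4lip
          (by
            show g1 (dist zu u) = g4 (dist zu u - dist zu u)
            rw [show dist zu u - dist zu u = 0 from by ring, hg1e, hg40])
        have hP20 : P2 0 = zu := by rw [hP2L 0 hA0, hg10]
        have hP2m : P2 (dist zu u + dist u zv) = zv := by
          by_cases h1 : dist zu u + dist u zv ≤ dist zu u
          · have h4 : dist u zv = 0 := by linarith
            rw [hP2L _ h1, show dist zu u + dist u zv = dist zu u from by linarith, hg1e]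
            exact eq_of_dist_eq_zero h4
          · rw [hP2R _ h1]
            show g4 (dist zu u + dist u zv - dist zu u) = zv
            rw [show dist zu u + dist u zv - dist zu u = dist u zv from by ring, hg4e]
        by_cases hc2 : dist zu u + dist u zv ≤ q * dist zu zv
        · obtain ⟨w', hw', ζ', hζ'Z, hζ'd, hζ'z, hζ'z'⟩ :=
            BR_lemma hX hZne hL hM hmorse2 hm20 hP2lip hP20 hP2m hzuZ hzvZ hD1
          have hρ'D : (dist zu u + dist u zv) / (31 * q - 1) ≤ dist zu zv / 30 := by
            rw [div_le_div_iff₀ hL1 (by norm_num : (0:ℝ) < 30)]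
            nlinarith [mul_nonneg (by linarith : (0:ℝ) ≤ q - 1) hD0]
          have hρ'0 : (0:ℝ) ≤ (dist zu u + dist u zv) / (31 * q - 1) := by positivity
          have huζ' : Metric.infDist u Z ≤ dist u ζ' := Metric.infDist_le_dist_of_mem hζ'Z
          by_cases hw'1 : w' ≤ dist zu u
          · have hval' : P2 w' = g1 w' := hP2L w' hw'1
            have hdzu' : dist zu (P2 w') = w' := by
              have h := hg1iso 0 ⟨le_refl 0, hA0⟩ w' ⟨hw'.1, hw'1⟩
              rw [hg10] at h
              rw [hval', h, abs_of_nonpos (by linarith [hw'.1] : (0:ℝ) - w' ≤ 0)]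
              ring
            have hduw' : dist u (P2 w') = dist zu u - w' := by
              have h := hg1iso w' ⟨hw'.1, hw'1⟩ (dist zu u) ⟨hA0, le_refl _⟩
              rw [hg1e] at h
              rw [hval', dist_comm, h, abs_of_nonpos (by linarith : w' - dist zu u ≤ 0)]
              ring
            have e1' : Metric.infDist u Z ≤ dist u (P2 w') + dist (P2 w') ζ' :=
              le_trans huζ' (dist_triangle _ _ _)
            have e2' : dist zu zv / 3 ≤ dist zu (P2 w') + dist (P2 w') ζ' :=
              le_trans hζ'z (dist_triangle _ _ _)
            rw [hduw'] at e1'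
            rw [hdzu'] at e2'
            linarith [hζ'd, hρ'D, hA]
          · push_neg at hw'1
            have hval' : P2 w' = g4 (w' - dist zu u) := hP2R w' (by linarith)
            have hmem4 : w' - dist zu u ∈ Set.Icc (0:ℝ) (dist u zv) :=
              ⟨by linarith, by linarith [hw'.2]⟩
            have hduw' : dist u (P2 w') = w' - dist zu u := by
              have h := hg4iso 0 ⟨le_refl 0, hA40⟩ (w' - dist zu u) hmem4
              rw [hg40] at h
              rw [hval', h, abs_of_nonpos (by linarith : (0:ℝ) - (w' - dist zu u) ≤ 0)]
              ring
            have hdzv' : dist zv (P2 w') = dist zu u + dist u zv - w' := by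
              have h := hg4iso (w' - dist zu u) hmem4 (dist u zv) ⟨hA40, le_refl _⟩
              rw [hg4e] at h
              rw [hval', dist_comm, h,
                abs_of_nonpos (by linarith [hw'.2] : w' - dist zu u - dist u zv ≤ 0)]
              ring
            have e1' : Metric.infDist u Z ≤ dist u (P2 w') + dist (P2 w') ζ' :=
              le_trans huζ' (dist_triangle _ _ _)
            have e2' : dist zu zv / 3 ≤ dist zv (P2 w') + dist (P2 w') ζ' :=
              le_trans hζ'z' (dist_triangle _ _ _)
            rw [hduw'] at e1'
            rw [hdzv'] at e2'
            linarith [hζ'd, hρ'D, hρD, hA, hA4le]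
        · push_neg at hc2
          have hqDD : dist zu zv ≤ q * dist zu zv :=
            le_mul_of_one_le_left hD0 hq
          have hkey : q * (dist zu zv - 20 * (M + 1)) ≤ 4 * Metric.infDist u Z := by
            nlinarith [hρD, hA, hA4le,
              mul_nonneg (by linarith : (0:ℝ) ≤ q - 1) (by linarith : (0:ℝ) ≤ M + 1)]
          by_cases hsgn : dist zu zv - 20 * (M + 1) ≤ 0
          · linarith
          · push_neg at hsgn
            have : dist zu zv - 20 * (M + 1) ≤ 4 * Metric.infDist u Z / q := by
              rw [le_div_iff₀ hq0]
              nlinarith [hkey]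
            linarith
      · -- w on third geodesic
        push_neg at hw1 hw2
        have hval : P1 w = g3 (w - (dist zu u + dist u v)) := by
          rw [hP1R w (by linarith), hInR w (by linarith)]
        have hmem3 : w - (dist zu u + dist u v) ∈ Set.Icc (0:ℝ) (dist v zv) :=
          ⟨by linarith, by linarith [hw.2]⟩
        have hdvw : dist v (P1 w) = w - (dist zu u + dist u v) := by
          have h := hg3iso 0 ⟨le_refl 0, hC0⟩ (w - (dist zu u + dist u v)) hmem3
          rw [hg30] at h
          rw [hval, h, abs_of_nonpos (by linarith : (0:ℝ) - (w - (dist zu u + dist u v)) ≤ 0)]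
          ring
        have hdzvw : dist zv (P1 w) = dist zu u + dist u v + dist v zv - w := by
          have h := hg3iso (w - (dist zu u + dist u v)) hmem3 (dist v zv) ⟨hC0, le_refl _⟩
          rw [hg3e] at h
          rw [hval, dist_comm, h,
            abs_of_nonpos (by linarith [hw.2] : w - (dist zu u + dist u v) - dist v zv ≤ 0)]
          ring
        have e1 : Metric.infDist v Z ≤ dist v (P1 w) + dist (P1 w) ζ :=
          le_trans hvζ (dist_triangle _ _ _)
        have e2 : dist zu zv / 3 ≤ dist zv (P1 w) + dist (P1 w) ζ :=
          le_trans hζz' (dist_triangle _ _ _)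
        rw [hdvw] at e1
        rw [hdzvw] at e2
        linarith [hζd, hρD, hC]


end AuxMorse

/-- In a geodesic metric space, a closed unbounded Morse subset is contracting. -/
theorem morse_implies_contracting
    {X : Type*} [MetricSpace X] (hX : IsGeodesicSpace X)
    (Z : Set X) (hZclosed : IsClosed Z) (hZunbdd : ¬ Bornology.IsBounded Z)
    (hmorse : IsMorse Z) :
    IsContracting Z := by
  have hZne : Z.Nonempty := by
    rcases Set.eq_empty_or_nonempty Z with h | h
    · exact absurd (by rw [h]; exact Bornology.isBounded_empty) hZunbdd
    · exact h
  have hMex : ∀ k : ℕ, ∃ M : ℝ, 0 ≤ M ∧ ∀ a b : ℝ, ∀ γ : ℝ → X,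
      IsQuasiGeodesicOn (31 * ((k:ℝ) + 1)) 2 a b γ → γ a ∈ Z → γ b ∈ Z →
      ∀ s ∈ Set.Icc a b, Metric.infDist (γ s) Z ≤ M := by
    intro k
    have hk : (1:ℝ) ≤ 31 * ((k:ℝ) + 1) := by
      have : (0:ℝ) ≤ (k:ℝ) := Nat.cast_nonneg k
      linarith
    obtain ⟨M0, hM0⟩ := hmorse (31 * ((k:ℝ) + 1)) hk 2 (by norm_num)
    exact ⟨max M0 0, le_max_right _ _, fun a b γ hqg ha hb s hs =>
      (hM0 a b γ hqg ha hb s hs).trans (le_max_left _ _)⟩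
  choose Mf hMf0 hMfspec using hMex
  refine ⟨fun r => ⨅ k : ℕ, (20 * (Mf k + 1) + 8 * r / ((k:ℝ) + 1)), ?_, ?_⟩
  · intro r hr x y hxy hxr p hp p' hp'
    have hyr : Metric.infDist y Z ≤ 2 * r := by
      have h1 : Metric.infDist y Z ≤ Metric.infDist x Z + dist y x :=
        Metric.infDist_le_infDist_add_dist
      rw [dist_comm] at h1
      linarith
    have main : ∀ k : ℕ, dist p p' ≤ 20 * (Mf k + 1) + 8 * r / ((k:ℝ) + 1) := by
      intro k
      have hkc : (0:ℝ) ≤ (k:ℝ) := Nat.cast_nonneg k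
      have hk1 : (1:ℝ) ≤ (k:ℝ) + 1 := by linarith
      have hkpos : (0:ℝ) < (k:ℝ) + 1 := by linarith
      have est : ∀ u v : X, dist u v ≤ Metric.infDist u Z → Metric.infDist u Z ≤ 2 * r →
          ∀ zu ∈ projSet Z u, ∀ zv ∈ projSet Z v,
            dist zu zv ≤ 20 * (Mf k + 1) + 8 * r / ((k:ℝ) + 1) := by
        intro u v huv hur zu hzu zv hzv
        have hke := key_est hX hZne hk1 (hMf0 k) (hMfspec k) hzu hzv huv
        have h2 : 4 * Metric.infDist u Z / ((k:ℝ) + 1) ≤ 8 * r / ((k:ℝ) + 1) := by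
          rw [div_le_div_iff_of_pos_right hkpos]
          linarith
        linarith
      rcases hp with hp | hp <;> rcases hp' with hp' | hp'
      · exact est x x (by simp [Metric.infDist_nonneg]) (by linarith) p hp p' hp'
      · exact est x y hxy (by linarith) p hp p' hp'
      · rw [dist_comm]; exact est x y hxy (by linarith) p' hp' p hp
      · exact est y y (by simp [Metric.infDist_nonneg]) hyr p hp p' hp'
    exact le_ciInf main
  · rw [Metric.tendsto_atTop]
    intro ε hε
    obtain ⟨k0, hk0⟩ := exists_nat_gt (16 / ε)
    have hk0pos : (0:ℝ) < (k0:ℝ) + 1 := by positivity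
    have h8 : 8 / ((k0:ℝ) + 1) < ε / 2 := by
      rw [div_lt_iff₀ hk0pos]
      rw [div_lt_iff₀ hε] at hk0
      nlinarith
    refine ⟨max 1 (40 * (Mf k0 + 1) / ε), fun r hr => ?_⟩
    have hr1 : (1:ℝ) ≤ r := le_trans (le_max_left _ _) hr
    have hr0 : (0:ℝ) < r := by linarith
    have hrM : 40 * (Mf k0 + 1) / ε ≤ r := le_trans (le_max_right _ _) hr
    have hterm0 : ∀ k : ℕ, (0:ℝ) ≤ 20 * (Mf k + 1) + 8 * r / ((k:ℝ) + 1) := by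
      intro k
      have h1 : (0:ℝ) ≤ 8 * r / ((k:ℝ) + 1) := by positivity
      have h2 := hMf0 k
      linarith
    have hbdd : BddBelow (Set.range fun k : ℕ => 20 * (Mf k + 1) + 8 * r / ((k:ℝ) + 1)) := by
      refine ⟨0, ?_⟩
      rintro _ ⟨k, rfl⟩
      exact hterm0 k
    have hσle : (⨅ k : ℕ, (20 * (Mf k + 1) + 8 * r / ((k:ℝ) + 1))) ≤
        20 * (Mf k0 + 1) + 8 * r / ((k0:ℝ) + 1) := ciInf_le hbdd k0
    have hσ0 : (0:ℝ) ≤ ⨅ k : ℕ, (20 * (Mf k + 1) + 8 * r / ((k:ℝ) + 1)) :=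
      le_ciInf hterm0
    have h20 : 20 * (Mf k0 + 1) ≤ ε / 2 * r := by
      rw [div_le_iff₀ hε] at hrM
      nlinarith
    have h8r : 8 * r / ((k0:ℝ) + 1) < ε / 2 * r := by
      rw [div_lt_iff₀ hk0pos] at h8
      rw [div_lt_iff₀ hk0pos]
      nlinarith
    have hlt : (⨅ k : ℕ, (20 * (Mf k + 1) + 8 * r / ((k:ℝ) + 1))) < ε * r := by
      calc (⨅ k : ℕ, (20 * (Mf k + 1) + 8 * r / ((k:ℝ) + 1))) ≤
          20 * (Mf k0 + 1) + 8 * r / ((k0:ℝ) + 1) := hσle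
      _ < ε / 2 * r + ε / 2 * r := by linarith
      _ = ε * r := by ring
    rw [Real.dist_eq, sub_zero, abs_of_nonneg (div_nonneg hσ0 hr0.le), div_lt_iff₀ hr0]
    linarith
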